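/- If problem (P1) is convexifiable, then the optimal value of (P1) equals the semi-Lagrangian dual value: inf(P1) = sup(D1), where both values are interpreted in the extended reals. -/

import Mathlib

open Pointwise Matrix

lemma rep_clm {k : ℕ} (φ : ((Fin k → ℝ) × ℝ) →L[ℝ] ℝ) (y : Fin k → ℝ) (t : ℝ) :
    φ (y, t) = (∑ i, y i * φ ((fun j => if i = j then 1 else 0), 0)) + t * φ (0, 1) := by
  have h1 : ((y, t) : (Fin k → ℝ) × ℝ) = (y, 0) + (0, t) := by simp
  rw [h1, map_add]
  congr 1
  · have := LinearMap.pi_apply_eq_sum_univ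
      ((φ : ((Fin k → ℝ) × ℝ) →ₗ[ℝ] ℝ).comp (LinearMap.inl ℝ (Fin k → ℝ) ℝ)) y
    simpa [smul_eq_mul] using this
  · have h2 : ((0, t) : (Fin k → ℝ) × ℝ) = t • (0, 1) := by simp
    rw [h2, _root_.map_smul, smul_eq_mul]

/-- If problem (P1) is convexifiable, then inf(P1) = sup(D1) in the
extended reals, where (D1) is the semi-Lagrangian dual of (P1). -/
theorem stmt_0 (n m : ℕ) (hn : 1 ≤ n)
    (A : Matrix (Fin n) (Fin n) ℝ) (hA : A.IsSymm)
    (b : Fin n → ℝ) (c : ℝ)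
    (A' : Fin (m + 1) → Matrix (Fin n) (Fin n) ℝ) (hA' : ∀ i, (A' i).IsSymm)
    (b' : Fin (m + 1) → Fin n → ℝ) (c' : Fin (m + 1) → ℝ)
    (f : (Fin n → ℝ) → ℝ) (hf : ∀ x, f x = x ⬝ᵥ A *ᵥ x + b ⬝ᵥ x + c)
    (g : Fin (m + 1) → (Fin n → ℝ) → ℝ)
    (hg : ∀ i x, g i x = x ⬝ᵥ A' i *ᵥ x + b' i ⬝ᵥ x + c' i)
    (hne : ∃ x : Fin n → ℝ, (∀ j, 0 ≤ x j) ∧ ∀ i, g i x ≤ 0)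
    (𝒜 : Set ((Fin (m + 1) → ℝ) × ℝ))
    (h𝒜 : 𝒜 = (fun x : Fin n → ℝ => ((fun i => g i x), f x)) '' {x | ∀ j, 0 ≤ x j}
          + {q : (Fin (m + 1) → ℝ) × ℝ | (∀ i, 0 ≤ q.1 i) ∧ 0 ≤ q.2})
    (hconv : {p : (Fin (m + 1) → ℝ) × ℝ | p.1 = 0} ∩ closure (convexHull ℝ 𝒜)
           = {p : (Fin (m + 1) → ℝ) × ℝ | p.1 = 0} ∩ 𝒜) :
    (⨅ x : {x : Fin n → ℝ // (∀ j, 0 ≤ x j) ∧ ∀ i, g i x ≤ 0}, (f x.1 : EReal))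
      = ⨆ u : {u : Fin (m + 1) → ℝ // ∀ i, 0 ≤ u i},
          ⨅ x : {x : Fin n → ℝ // ∀ j, 0 ≤ x j},
            ((f x.1 + ∑ i, u.1 i * g i x.1 : ℝ) : EReal) := by
  -- membership helper for 𝒜
  have hmem : ∀ (x : Fin n → ℝ), (∀ j, 0 ≤ x j) → ∀ q : (Fin (m + 1) → ℝ) × ℝ,
      (∀ i, 0 ≤ q.1 i) → 0 ≤ q.2 →
      (((fun i => g i x), f x) + q) ∈ 𝒜 := by
    intro x hx q hq1 hq2
    rw [h𝒜]
    exact Set.add_mem_add ⟨x, hx, rfl⟩ ⟨hq1, hq2⟩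
  -- weak duality
  have weak : (⨆ u : {u : Fin (m + 1) → ℝ // ∀ i, 0 ≤ u i},
        ⨅ x : {x : Fin n → ℝ // ∀ j, 0 ≤ x j},
          ((f x.1 + ∑ i, u.1 i * g i x.1 : ℝ) : EReal))
      ≤ ⨅ x : {x : Fin n → ℝ // (∀ j, 0 ≤ x j) ∧ ∀ i, g i x ≤ 0}, (f x.1 : EReal) := by
    refine iSup_le fun u => le_iInf fun x => ?_
    have h1 : (⨅ x' : {x : Fin n → ℝ // ∀ j, 0 ≤ x j},
        ((f x'.1 + ∑ i, u.1 i * g i x'.1 : ℝ) : EReal))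
        ≤ ((f x.1 + ∑ i, u.1 i * g i x.1 : ℝ) : EReal) :=
      iInf_le _ (⟨x.1, x.2.1⟩ : {x : Fin n → ℝ // ∀ j, 0 ≤ x j})
    refine h1.trans ?_
    have h2 : f x.1 + ∑ i, u.1 i * g i x.1 ≤ f x.1 := by
      have : (∑ i, u.1 i * g i x.1) ≤ 0 :=
        Finset.sum_nonpos fun i _ => mul_nonpos_iff.mpr (Or.inl ⟨u.2 i, x.2.2 i⟩)
      linarith
    exact_mod_cast h2
  -- strong duality
  refine le_antisymm ?_ weak
  by_contra hcon
  rw [not_le] at hcon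
  obtain ⟨β, hβD, hβP⟩ := EReal.lt_iff_exists_real_btwn.mp hcon
  -- β is a strict lower bound of f on the feasible set
  have hfb : ∀ x : Fin n → ℝ, (∀ j, 0 ≤ x j) → (∀ i, g i x ≤ 0) → β < f x := by
    intro x hx hg0
    have := lt_of_lt_of_le hβP (iInf_le _ ⟨x, hx, hg0⟩)
    exact_mod_cast this
  -- (0, β) is not in 𝒜
  have hβA : (((0 : Fin (m + 1) → ℝ), β) : (Fin (m + 1) → ℝ) × ℝ) ∉ 𝒜 := by
    intro hβmem
    rw [h𝒜, Set.mem_add] at hβmem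
    obtain ⟨a, ha, q, hq, hsum⟩ := hβmem
    obtain ⟨x, hx, rfl⟩ := ha
    obtain ⟨hq1, hq2⟩ := hq
    have h1 : ∀ i, g i x + q.1 i = 0 := by
      intro i
      have := congrArg Prod.fst hsum
      exact congrFun this i
    have h2 : f x + q.2 = β := congrArg Prod.snd hsum
    have hfeas : ∀ i, g i x ≤ 0 := fun i => by nlinarith [hq1 i, h1 i]
    have := hfb x hx hfeas
    linarith
  -- hence (0, β) is not in the closed convex hull
  have hβcc : (((0 : Fin (m + 1) → ℝ), β) : (Fin (m + 1) → ℝ) × ℝ)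
      ∉ closure (convexHull ℝ 𝒜) := by
    intro h
    have hmem' : (((0 : Fin (m + 1) → ℝ), β) : (Fin (m + 1) → ℝ) × ℝ)
        ∈ {p : (Fin (m + 1) → ℝ) × ℝ | p.1 = 0} ∩ 𝒜 := by
      rw [← hconv]; exact ⟨rfl, h⟩
    exact hβA hmem'.2
  -- separation
  obtain ⟨φ, α, hφβ, hφcc⟩ :=
    geometric_hahn_banach_point_closed ((convex_convexHull ℝ 𝒜).closure) isClosed_closure hβcc
  have hφA : ∀ p ∈ 𝒜, α < φ p := fun p hp =>
    hφcc p (subset_closure (subset_convexHull ℝ 𝒜 hp))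
  set u : Fin (m + 1) → ℝ := fun i => φ ((fun j => if i = j then 1 else 0), 0) with hu_def
  set r : ℝ := φ (0, 1) with hr_def
  have hrep : ∀ (y : Fin (m + 1) → ℝ) (t : ℝ),
      φ (y, t) = (∑ i, y i * u i) + t * r := fun y t => rep_clm φ y t
  obtain ⟨x₀, hx₀, hg₀⟩ := hne
  have ha₀ : ∀ q : (Fin (m + 1) → ℝ) × ℝ, (∀ i, 0 ≤ q.1 i) → 0 ≤ q.2 →
      α < φ ((((fun i => g i x₀), f x₀) : (Fin (m + 1) → ℝ) × ℝ) + q) :=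
    fun q h1 h2 => hφA _ (hmem x₀ hx₀ q h1 h2)
  have hA0 : α < φ (((fun i => g i x₀), f x₀) : (Fin (m + 1) → ℝ) × ℝ) := by
    simpa using ha₀ 0 (fun _ => le_rfl) le_rfl
  -- nonnegativity of the multipliers: recession argument
  have hdir : ∀ d : (Fin (m + 1) → ℝ) × ℝ, (∀ i, 0 ≤ d.1 i) → 0 ≤ d.2 → 0 ≤ φ d := by
    intro d hd1 hd2
    by_contra h
    push_neg at h
    set a₀ : (Fin (m + 1) → ℝ) × ℝ := ((fun i => g i x₀), f x₀) with ha₀def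
    set s : ℝ := (φ a₀ - α) / (-φ d) with hs_def
    have hs : 0 ≤ s := div_nonneg (by linarith) (by linarith)
    have hq1 : ∀ i, 0 ≤ (s • d).1 i := fun i => by
      have : (s • d).1 i = s * d.1 i := rfl
      rw [this]; exact mul_nonneg hs (hd1 i)
    have hq2 : 0 ≤ (s • d).2 := by
      have : (s • d).2 = s * d.2 := rfl
      rw [this]; exact mul_nonneg hs hd2
    have hlt := ha₀ (s • d) hq1 hq2
    rw [map_add, _root_.map_smul, smul_eq_mul] at hlt
    have hd0 : φ d ≠ 0 := ne_of_lt h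
    have hsd : s * φ d = -(φ a₀ - α) := by
      rw [hs_def]; field_simp [hd0]
    rw [hsd] at hlt
    linarith
  have hu : ∀ i, 0 ≤ u i := by
    intro i
    refine hdir ((fun j => if i = j then 1 else 0), 0) (fun j => ?_) le_rfl
    by_cases h : i = j <;> simp [h]
  have hr0 : 0 ≤ r := hdir (0, 1) (fun i => le_rfl) zero_le_one
  -- r is positive
  have hr : 0 < r := by
    rcases lt_or_eq_of_le hr0 with h | h
    · exact h
    · exfalso
      have h1 : φ (((fun i => g i x₀), f x₀) : (Fin (m + 1) → ℝ) × ℝ)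
          = (∑ i, g i x₀ * u i) + f x₀ * r := hrep _ _
      have h2 : (∑ i, g i x₀ * u i) ≤ 0 :=
        Finset.sum_nonpos fun i _ => mul_nonpos_iff.mpr (Or.inr ⟨hg₀ i, hu i⟩)
      have h3 : φ (((0 : Fin (m + 1) → ℝ), β) : (Fin (m + 1) → ℝ) × ℝ) = β * r := by
        rw [hrep]; simp
      rw [← h] at h1 h3
      simp at h3
      -- h3 : φ (0, β) = 0, hφβ : φ (0,β) < α, so 0 < α
      nlinarith [hA0, hφβ]
  -- the Lagrangian with multipliers u / r is bounded below by β on the orthant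
  have hL : ∀ x : Fin n → ℝ, (∀ j, 0 ≤ x j) → β ≤ f x + ∑ i, (u i / r) * g i x := by
    intro x hx
    have h1 : α < φ (((fun i => g i x), f x) : (Fin (m + 1) → ℝ) × ℝ) := by
      have := hφA _ (hmem x hx 0 (fun _ => le_rfl) le_rfl)
      simpa using this
    rw [hrep] at h1
    have h2 : β * r < α := by
      have := hφβ
      rw [hrep] at this
      simpa using this
    have hsum : ∑ i, (u i / r) * g i x = (∑ i, g i x * u i) / r := by
      rw [Finset.sum_div]
      exact Finset.sum_congr rfl fun i _ => by ring
    rw [hsum]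
    have hkey : β * r < (f x + (∑ i, g i x * u i) / r) * r := by
      rw [add_mul, div_mul_cancel₀ _ (ne_of_gt hr)]
      linarith
    have := lt_of_mul_lt_mul_right hkey hr.le
    linarith
  -- conclude: the dual value is at least β, contradiction
  set ubar : {u : Fin (m + 1) → ℝ // ∀ i, 0 ≤ u i} :=
    ⟨fun i => u i / r, fun i => div_nonneg (hu i) hr.le⟩ with hubar
  have hub : (β : EReal) ≤ ⨅ x : {x : Fin n → ℝ // ∀ j, 0 ≤ x j},
      ((f x.1 + ∑ i, ubar.1 i * g i x.1 : ℝ) : EReal) :=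
    le_iInf fun x => by exact_mod_cast hL x.1 x.2
  have hfinal : (β : EReal) ≤ ⨆ u : {u : Fin (m + 1) → ℝ // ∀ i, 0 ≤ u i},
      ⨅ x : {x : Fin n → ℝ // ∀ j, 0 ≤ x j},
        ((f x.1 + ∑ i, u.1 i * g i x.1 : ℝ) : EReal) :=
    hub.trans (le_iSup (fun u : {u : Fin (m + 1) → ℝ // ∀ i, 0 ≤ u i} =>
      ⨅ x : {x : Fin n → ℝ // ∀ j, 0 ≤ x j},
        ((f x.1 + ∑ i, u.1 i * g i x.1 : ℝ) : EReal)) ubar)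
  exact absurd hfinal (not_le.mpr hβD)
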